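/- For every constant α > log 2 there exist constants γ_α, M_α > 0 such that for every integer k ≥ 2 and every integer m ≥ 2(1 + αk), there exist integers n, d ≥ 1 with n + d = m and a convex body C ⊂ ℝ^{n+d} whose projection to ℝⁿ contains a translate of k·B∞ⁿ, yet with S = C ∩ (ℤⁿ × ℝ^d), sup_{y ∈ S} h_S(y)/H_d(S) ≤ M_α · exp(−γ_α · m/k). One may take γ_α = min{log 2, α − log 2}/(2(α+1)) and M_α = 1 + 1/(1 − e^{−(α−log 2)}). -/

import Mathlib

open MeasureTheory Set
open scoped ENNReal

/-- The mixed-integer volume `H_d(A) = Σ_{z ∈ ℤⁿ} vol_d(A_z)`. -/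
noncomputable def mixVol (n d : ℕ) (A : Set ((Fin n → ℝ) × (Fin d → ℝ))) : ℝ≥0∞ :=
  ∑' z : Fin n → ℤ, volume {x : Fin d → ℝ | ((fun i => (z i : ℝ)), x) ∈ A}

/-- The mixed-integer lattice `ℤⁿ × ℝ^d` as a subset of `ℝⁿ × ℝ^d`. -/
def mixLattice (n d : ℕ) : Set ((Fin n → ℝ) × (Fin d → ℝ)) :=
  {p | ∃ z : Fin n → ℤ, p.1 = fun i => (z i : ℝ)}

/-- The standard bilinear pairing on `ℝⁿ × ℝ^d`. -/
def dotP (n d : ℕ) (a y : (Fin n → ℝ) × (Fin d → ℝ)) : ℝ :=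
  (∑ i, a.1 i * y.1 i) + ∑ j, a.2 j * y.2 j

/-- The mixed-integer halfspace depth of a point `y` with respect to `S`:
the infimum of `H_d(S ∩ H)` over closed halfspaces `H` containing `y`. -/
noncomputable def depth (n d : ℕ) (S : Set ((Fin n → ℝ) × (Fin d → ℝ)))
    (y : (Fin n → ℝ) × (Fin d → ℝ)) : ℝ≥0∞ :=
  ⨅ (a : (Fin n → ℝ) × (Fin d → ℝ)) (c : ℝ) (_ : a ≠ 0) (_ : c ≤ dotP n d a y),
    mixVol n d (S ∩ {u | c ≤ dotP n d a u})

set_option maxHeartbeats 1600000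
set_option linter.unusedVariables false

lemma prod_range_mul_div {M : Type*} [CommMonoid M] (f : ℕ → M) (D : ℕ) (hD : 0 < D) :
    ∀ n : ℕ, ∏ j ∈ Finset.range (n * D), f (j / D) = ∏ i ∈ Finset.range n, (f i) ^ D := by
  intro n
  induction n with
  | zero => simp
  | succ n ih =>
    have h1 : (n + 1) * D = n * D + D := by ring
    rw [h1, Finset.prod_range_add, ih, Finset.prod_range_succ]
    congr 1
    have : ∀ x ∈ Finset.range D, f ((n * D + x) / D) = f n := by
      intro x hx
      simp only [Finset.mem_range] at hx
      congr 1
      rw [show n * D + x = x + D * n by ring, Nat.add_mul_div_left _ _ hD,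
        Nat.div_eq_of_lt hx, Nat.zero_add]
    rw [Finset.prod_congr rfl this, Finset.prod_const, Finset.card_range]

lemma tsum_pi_prod : ∀ (n : ℕ) (f : Fin n → ℤ → ℝ≥0∞),
    ∑' z : Fin n → ℤ, ∏ i, f i (z i) = ∏ i, ∑' j : ℤ, f i j := by
  intro n
  induction n with
  | zero =>
    intro f
    simp only [Finset.univ_eq_empty, Finset.prod_empty]
    rw [tsum_eq_single (fun i => (0:ℤ)) (by intro b hb; exact absurd (funext fun i => i.elim0) hb)]
  | succ n ih =>
    intro f
    rw [← (Fin.consEquiv (fun _ : Fin (n+1) => ℤ)).tsum_eq]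
    have key : ∀ p : ℤ × (Fin n → ℤ),
        (∏ i, f i ((Fin.consEquiv (fun _ : Fin (n+1) => ℤ)) p i)) = f 0 p.1 * ∏ i, f i.succ (p.2 i) := by
      intro p
      rw [Fin.prod_univ_succ]
      simp [Fin.consEquiv]
    calc ∑' p : ℤ × (Fin n → ℤ), ∏ i, f i ((Fin.consEquiv (fun _ : Fin (n+1) => ℤ)) p i)
        = ∑' p : ℤ × (Fin n → ℤ), f 0 p.1 * ∏ i, f i.succ (p.2 i) := by
          exact tsum_congr key
      _ = ∑' a : ℤ, ∑' g : Fin n → ℤ, f 0 a * ∏ i, f i.succ (g i) :=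
          ENNReal.tsum_prod (f := fun (a : ℤ) (g : Fin n → ℤ) => f 0 a * ∏ i, f i.succ (g i))
      _ = ∑' a : ℤ, f 0 a * ∑' g : Fin n → ℤ, ∏ i, f i.succ (g i) := by
          congr 1; ext a; exact ENNReal.tsum_mul_left
      _ = (∑' a : ℤ, f 0 a) * ∑' g : Fin n → ℤ, ∏ i, f i.succ (g i) := ENNReal.tsum_mul_right
      _ = ∏ i, ∑' j : ℤ, f i j := by rw [ih, Fin.prod_univ_succ]

lemma tsum_int_of_support_range (f : ℤ → ℝ≥0∞) (N : ℕ)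
    (h : ∀ a : ℤ, ¬(0 ≤ a ∧ a ≤ N) → f a = 0) :
    ∑' a : ℤ, f a = ∑ j ∈ Finset.range (N + 1), f j := by
  rw [tsum_eq_sum (s := (Finset.range (N+1)).map ⟨fun j : ℕ => (j : ℤ), fun a b h => by simpa using h⟩)]
  · rw [Finset.sum_map]; rfl
  · intro b hb
    apply h
    intro hcon
    apply hb
    simp only [Finset.mem_map, Finset.mem_range, Function.Embedding.coeFn_mk]
    exact ⟨b.toNat, by omega, by show ((b.toNat : ℕ) : ℤ) = b; omega⟩

lemma sum_geom_le (x : ℝ) (N : ℕ) (h0 : 0 ≤ x) (h1 : x < 1) :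
    ∑ j ∈ Finset.range N, x ^ j ≤ (1 - x)⁻¹ := by
  rw [← tsum_geometric_of_lt_one h0 h1]
  exact Summable.sum_le_tsum _ (fun i _ => pow_nonneg h0 i) (summable_geometric_of_lt_one h0 h1)

lemma sum_succ_mul_geom_le (x : ℝ) (N : ℕ) (h0 : 0 ≤ x) (h1 : x < 1) :
    ∑ i ∈ Finset.range N, ((i : ℝ) + 1) * x ^ i ≤ ((1 - x) ^ 2)⁻¹ := by
  have hn : ‖x‖ < 1 := by rwa [Real.norm_eq_abs, abs_of_nonneg h0]
  have hs1 : Summable (fun i : ℕ => (i : ℝ) * x ^ i) := by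
    have := summable_pow_mul_geometric_of_norm_lt_one (R := ℝ) (k := 1) hn
    simpa using this
  have hs2 : Summable (fun i : ℕ => x ^ i) := summable_geometric_of_lt_one h0 h1
  have hsum : Summable (fun i : ℕ => ((i : ℝ) + 1) * x ^ i) := by
    have := hs1.add hs2
    convert this using 2 with i
    ring
  have hle : ∑ i ∈ Finset.range N, ((i : ℝ) + 1) * x ^ i ≤ ∑' i : ℕ, ((i : ℝ) + 1) * x ^ i :=
    Summable.sum_le_tsum _ (fun i _ => by positivity) hsum
  have hval : ∑' i : ℕ, ((i : ℝ) + 1) * x ^ i = ((1 - x) ^ 2)⁻¹ := by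
    have e1 : ∑' i : ℕ, ((i : ℝ) + 1) * x ^ i
        = (∑' i : ℕ, (i : ℝ) * x ^ i) + ∑' i : ℕ, x ^ i := by
      rw [← Summable.tsum_add hs1 hs2]
      congr 1; ext i; ring
    rw [e1, tsum_coe_mul_geometric_of_norm_lt_one hn, tsum_geometric_of_lt_one h0 h1]
    have h2 : (1 - x) ≠ 0 := by nlinarith
    field_simp
    ring
  linarith [hle, hval.le]

lemma sum_shift_bound (s : ℝ) (hs0 : 0 ≤ s) (hs1 : s < 1) (R : ℕ) :
    ∑ j ∈ Finset.Ico 2 (R + 1), ((j : ℝ) - 1) * s ^ j ≤ s ^ 2 / (1 - s) ^ 2 := by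
  rw [Finset.sum_Ico_eq_sum_range]
  have e1 : ∀ i ∈ Finset.range (R + 1 - 2),
      (((2 + i : ℕ) : ℝ) - 1) * s ^ (2 + i) = s ^ 2 * (((i : ℝ) + 1) * s ^ i) := by
    intro i _
    push_cast
    ring
  rw [Finset.sum_congr rfl e1, ← Finset.mul_sum]
  have h2 : (0:ℝ) < 1 - s := by linarith
  have := sum_succ_mul_geom_le s (R + 1 - 2) hs0 hs1
  rw [div_eq_mul_inv]
  exact mul_le_mul_of_nonneg_left this (by positivity)

section Coord
variable (ε : ℝ) (R : ℕ) (w : ℕ → ℝ)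

/-- bound on the total: G ≤ 2 -/
lemma G_le_two (hε0 : 0 < ε)
    (hwle : ∀ j, j ≤ R → w j ≤ Real.exp (-(Real.log 2 + ε) * j)) :
    ∑ j ∈ Finset.range (R + 1), w j ≤ 2 := by
  have h1 : ∀ j ∈ Finset.range (R + 1), w j ≤ (1/2 : ℝ) ^ j := by
    intro j hjm
    simp only [Finset.mem_range] at hjm
    refine (hwle j (by omega)).trans ?_
    have e1 : Real.exp (-(Real.log 2 + ε) * j) = Real.exp (-(Real.log 2 + ε)) ^ j := by
      rw [← Real.exp_nat_mul]; ring_nf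
    rw [e1]
    apply pow_le_pow_left₀ (Real.exp_nonneg _)
    have h2 : Real.exp (-(Real.log 2 + ε)) ≤ Real.exp (-Real.log 2) :=
      Real.exp_le_exp.2 (by linarith)
    have h3 : Real.exp (-Real.log 2) = 1/2 := by
      rw [Real.exp_neg, Real.exp_log (by norm_num : (0:ℝ) < 2)]
      norm_num
    linarith
  calc ∑ j ∈ Finset.range (R + 1), w j ≤ ∑ j ∈ Finset.range (R + 1), (1/2:ℝ) ^ j :=
        Finset.sum_le_sum h1
    _ ≤ (1 - 1/2 : ℝ)⁻¹ := sum_geom_le _ _ (by norm_num) (by norm_num)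
    _ = 2 := by norm_num

lemma coordA (hε0 : 0 < ε) (hε1 : ε ≤ 0.16) (hR : 1 ≤ R)
    (hw0 : w 0 = 1) (hw1 : 0.135 ≤ w 1) (hwnn : ∀ j, j ≤ R → 0 ≤ w j)
    (hwle : ∀ j, j ≤ R → w j ≤ Real.exp (-(Real.log 2 + ε) * j)) :
    ∑ j ∈ Finset.range (R + 1), Real.exp (-(ε/4) * j) * w j
      ≤ (1 - ε^2/16) * ∑ j ∈ Finset.range (R + 1), w j := by
  set θ : ℝ := ε/4 with hθ
  have hθ0 : 0 < θ := by positivity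
  set G : ℝ := ∑ j ∈ Finset.range (R + 1), w j with hG
  have hG2 : G ≤ 2 := G_le_two ε R w hε0 hwle
  have hGnn : 0 ≤ G := Finset.sum_nonneg fun j hj => hwnn j (by
    simp only [Finset.mem_range] at hj; omega)
  -- G - S ≥ (1 - exp(-θ)) * w 1
  have key : (1 - Real.exp (-θ)) * w 1 ≤ G - ∑ j ∈ Finset.range (R+1), Real.exp (-θ * j) * w j := by
    have e1 : G - ∑ j ∈ Finset.range (R+1), Real.exp (-θ * j) * w j
        = ∑ j ∈ Finset.range (R+1), (1 - Real.exp (-θ * j)) * w j := by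
      rw [← Finset.sum_sub_distrib]
      congr 1; ext j; ring
    rw [e1]
    have h1mem : 1 ∈ Finset.range (R + 1) := by simp; omega
    have hterm : ∀ j ∈ Finset.range (R+1), 0 ≤ (1 - Real.exp (-θ * j)) * w j := by
      intro j hjm
      simp only [Finset.mem_range] at hjm
      apply mul_nonneg _ (hwnn j (by omega))
      have : Real.exp (-θ * j) ≤ 1 := by
        rw [show (1:ℝ) = Real.exp 0 by simp]
        apply Real.exp_le_exp.2
        have : (0:ℝ) ≤ (j:ℝ) := Nat.cast_nonneg j
        nlinarith
      linarith
    have := Finset.single_le_sum hterm h1mem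
    simpa using this
  -- 1 - exp(-θ) ≥ θ(1-θ)
  have hexp : θ * (1 - θ) ≤ 1 - Real.exp (-θ) := by
    have h1 : θ + 1 ≤ Real.exp θ := Real.add_one_le_exp θ
    have hid : Real.exp (-θ) * Real.exp θ = 1 := by
      rw [← Real.exp_add]; simp
    have hp := Real.exp_pos (-θ)
    have hmul : Real.exp (-θ) * (θ + 1) ≤ 1 := by
      calc Real.exp (-θ) * (θ + 1) ≤ Real.exp (-θ) * Real.exp θ :=
            mul_le_mul_of_nonneg_left h1 hp.le
        _ = 1 := hid
    nlinarith [sq_nonneg θ, hθ0.le, hmul]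
  -- numeric: 0.135 * θ(1-θ) ≥ ε²/16 * 2 ≥ ε²/16 * G
  have hnum : (ε^2/16) * G ≤ 0.135 * (θ * (1 - θ)) := by
    have : (ε^2/16) * G ≤ (ε^2/16) * 2 := by
      apply mul_le_mul_of_nonneg_left hG2 (by positivity)
    refine this.trans ?_
    rw [hθ]
    nlinarith
  have hchain : (ε^2/16) * G ≤ (1 - Real.exp (-θ)) * w 1 := by
    have hexp1 : 1 - Real.exp (-θ) ≤ 1 := by
      have := Real.exp_nonneg (-θ); linarith
    have w1le : w 1 ≤ 1 := by
      have := hwle 1 (by omega)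
      have h5 : Real.exp (-(Real.log 2 + ε) * (1:ℕ)) ≤ 1 := by
        rw [show ((1:ℕ):ℝ) = 1 by norm_num, mul_one, show (1:ℝ) = Real.exp 0 by simp]
        apply Real.exp_le_exp.2
        have := Real.log_nonneg (by norm_num : (1:ℝ) ≤ 2)
        linarith
      linarith
    calc (ε^2/16) * G ≤ 0.135 * (θ * (1-θ)) := hnum
      _ ≤ w 1 * (1 - Real.exp (-θ)) := by
          have hθθ : 0 ≤ θ * (1-θ) := by nlinarith
          exact mul_le_mul hw1 hexp hθθ ((by norm_num : (0:ℝ) ≤ 0.135).trans hw1)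
      _ = (1 - Real.exp (-θ)) * w 1 := by ring
  linarith [key, hchain]

end Coord

lemma coordB (ε : ℝ) (R : ℕ) (w : ℕ → ℝ) (hε0 : 0 < ε) (hε1 : ε ≤ 0.16) (hR : 1 ≤ R)
    (hw0 : w 0 = 1) (hwnn : ∀ j, j ≤ R → 0 ≤ w j)
    (hwle : ∀ j, j ≤ R → w j ≤ Real.exp (-(Real.log 2 + ε) * j)) :
    ∑ j ∈ Finset.range (R + 1), Real.exp ((ε/4) * ((j:ℝ) - 1)) * w j
      ≤ (1 - ε^2/16) * ∑ j ∈ Finset.range (R + 1), w j := by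
  set θ : ℝ := ε/4 with hθ
  have hθ0 : 0 < θ := by positivity
  set G : ℝ := ∑ j ∈ Finset.range (R + 1), w j with hG
  have hG2 : G ≤ 2 := G_le_two ε R w hε0 hwle
  have hGnn : 0 ≤ G := Finset.sum_nonneg fun j hj => hwnn j (by
    simp only [Finset.mem_range] at hj; omega)
  set s : ℝ := Real.exp (θ - Real.log 2 - ε) with hs
  have hs0 : 0 < s := Real.exp_pos _
  have hsb : s * (4 + 3*ε) ≤ 2 := by
    have e1 : s = Real.exp (-Real.log 2) * Real.exp (-(3*ε/4)) := by
      rw [hs, ← Real.exp_add]; congr 1; rw [hθ]; ring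
    have e2 : Real.exp (-Real.log 2) = 1/2 := by
      rw [Real.exp_neg, Real.exp_log (by norm_num : (0:ℝ) < 2)]; norm_num
    have h1 : (3*ε/4) + 1 ≤ Real.exp (3*ε/4) := Real.add_one_le_exp _
    have hid : Real.exp (-(3*ε/4)) * Real.exp (3*ε/4) = 1 := by
      rw [← Real.exp_add]; simp
    have hp := Real.exp_pos (-(3*ε/4))
    have hmul : Real.exp (-(3*ε/4)) * ((3*ε/4) + 1) ≤ 1 := by
      calc Real.exp (-(3*ε/4)) * ((3*ε/4) + 1) ≤ Real.exp (-(3*ε/4)) * Real.exp (3*ε/4) :=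
            mul_le_mul_of_nonneg_left h1 hp.le
        _ = 1 := hid
    rw [e1, e2]
    nlinarith [hp.le]
  have hs1 : s < 1 := by nlinarith
  -- (s/(1-s))² ≤ 1 - 2ε  i.e.  s² ≤ (1-2ε)(1-s)²
  have hfrac : s^2/(1-s)^2 ≤ 1 - 2*ε := by
    have h1s : 0 < 1 - s := by linarith
    rw [div_le_iff₀ (by positivity)]
    have hB : 2+3*ε ≤ (1-s)*(4+3*ε) := by nlinarith
    have key : s^2 * ((4+3*ε)^2) ≤ ((1-2*ε) * (1-s)^2) * ((4+3*ε)^2) := by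
      have c2 : (s*(4+3*ε))^2 ≤ 4 := by nlinarith [mul_nonneg hs0.le (by linarith : (0:ℝ) ≤ 4+3*ε)]
      have c3 : (4:ℝ) ≤ (1-2*ε)*(2+3*ε)^2 := by
        nlinarith [mul_nonneg (mul_nonneg hε0.le hε0.le) (sub_nonneg.2 hε1),
          mul_nonneg hε0.le (sub_nonneg.2 hε1)]
      have c4 : (1-2*ε)*(2+3*ε)^2 ≤ (1-2*ε)*((1-s)*(4+3*ε))^2 := by
        apply mul_le_mul_of_nonneg_left _ (by linarith)
        apply pow_le_pow_left₀ (by linarith) hB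
      nlinarith [c2, c3, c4]
    have hpos : (0:ℝ) < (4+3*ε)^2 := by positivity
    calc s^2 = s^2 * ((4+3*ε)^2) / ((4+3*ε)^2) := by field_simp
      _ ≤ ((1-2*ε) * (1-s)^2) * ((4+3*ε)^2) / ((4+3*ε)^2) := by gcongr
      _ = (1-2*ε) * (1-s)^2 := by field_simp
  -- pointwise bound on j ≥ 2 terms
  have hpt : ∀ j ∈ Finset.Ico 2 (R+1),
      (Real.exp (θ * ((j:ℝ)-1)) - 1) * w j ≤ θ * (((j:ℝ)-1) * s ^ j) := by
    intro j hj
    simp only [Finset.mem_Ico] at hj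
    have hj2 : (2:ℝ) ≤ (j:ℝ) := by exact_mod_cast hj.1
    set x : ℝ := θ * ((j:ℝ)-1) with hx
    have hx0 : 0 ≤ x := by rw [hx]; apply mul_nonneg hθ0.le; linarith
    -- e^x - 1 ≤ x e^x
    have hex : Real.exp x - 1 ≤ x * Real.exp x := by
      have h1 : (-x) + 1 ≤ Real.exp (-x) := by linarith [Real.add_one_le_exp (-x)]
      have hid : Real.exp (-x) * Real.exp x = 1 := by rw [← Real.exp_add]; simp
      have hp := Real.exp_pos x
      nlinarith [mul_le_mul_of_nonneg_right h1 hp.le]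
    have hw := hwle j (by omega)
    have hwj0 := hwnn j (by omega)
    have hex0 : (0:ℝ) ≤ Real.exp x - 1 := by
      have := Real.add_one_le_exp x
      linarith
    calc (Real.exp x - 1) * w j ≤ (Real.exp x - 1) * Real.exp (-(Real.log 2 + ε) * j) :=
          mul_le_mul_of_nonneg_left hw hex0
      _ ≤ (x * Real.exp x) * Real.exp (-(Real.log 2 + ε) * j) :=
          mul_le_mul_of_nonneg_right hex (Real.exp_nonneg _)
      _ = x * Real.exp (x + (-(Real.log 2 + ε) * j)) := by rw [Real.exp_add]; ring
      _ ≤ x * Real.exp ((θ - Real.log 2 - ε) * j) := by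
          apply mul_le_mul_of_nonneg_left _ hx0
          apply Real.exp_le_exp.2
          rw [hx]
          nlinarith [Real.log_nonneg (by norm_num : (1:ℝ) ≤ 2)]
      _ = θ * (((j:ℝ)-1) * s ^ j) := by
          rw [hs, ← Real.exp_nat_mul]
          rw [hx]
          ring_nf
  -- sum the tail bound
  have htail : ∑ j ∈ Finset.Ico 2 (R+1), (Real.exp (θ * ((j:ℝ)-1)) - 1) * w j
      ≤ θ * (s^2/(1-s)^2) := by
    calc ∑ j ∈ Finset.Ico 2 (R+1), (Real.exp (θ * ((j:ℝ)-1)) - 1) * w j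
        ≤ ∑ j ∈ Finset.Ico 2 (R+1), θ * (((j:ℝ)-1) * s ^ j) := Finset.sum_le_sum hpt
      _ = θ * ∑ j ∈ Finset.Ico 2 (R+1), ((j:ℝ)-1) * s ^ j := by rw [Finset.mul_sum]
      _ ≤ θ * (s^2/(1-s)^2) :=
          mul_le_mul_of_nonneg_left (sum_shift_bound s hs0.le hs1 R) hθ0.le
  -- split the difference
  have hsplit : G - ∑ j ∈ Finset.range (R+1), Real.exp (θ * ((j:ℝ)-1)) * w j
      = (1 - Real.exp (-θ)) - ∑ j ∈ Finset.Ico 2 (R+1), (Real.exp (θ * ((j:ℝ)-1)) - 1) * w j := by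
    have e1 : G - ∑ j ∈ Finset.range (R+1), Real.exp (θ * ((j:ℝ)-1)) * w j
        = ∑ j ∈ Finset.range (R+1), (1 - Real.exp (θ * ((j:ℝ)-1))) * w j := by
      rw [← Finset.sum_sub_distrib]
      congr 1; ext j; ring
    rw [e1]
    have e2 : Finset.range (R+1) = Finset.Ico 0 (R+1) := by rw [Finset.range_eq_Ico]
    rw [e2, ← Finset.sum_Ico_consecutive _ (by omega : 0 ≤ 2) (by omega : 2 ≤ R+1)]
    have e3 : ∑ j ∈ Finset.Ico (0:ℕ) 2, (1 - Real.exp (θ * ((j:ℝ)-1))) * w j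
        = 1 - Real.exp (-θ) := by
      have hico : Finset.Ico (0:ℕ) 2 = ({0, 1} : Finset ℕ) := rfl
      rw [hico, Finset.sum_pair (by norm_num : (0:ℕ) ≠ 1), hw0]
      have c0 : θ * (((0:ℕ):ℝ) - 1) = -θ := by push_cast; ring
      have c1 : θ * (((1:ℕ):ℝ) - 1) = 0 := by push_cast; ring
      rw [c0, c1, Real.exp_zero]
      ring
    rw [e3]
    have e4 : ∑ j ∈ Finset.Ico 2 (R+1), (1 - Real.exp (θ * ((j:ℝ)-1))) * w j
        = - ∑ j ∈ Finset.Ico 2 (R+1), (Real.exp (θ * ((j:ℝ)-1)) - 1) * w j := by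
      rw [← Finset.sum_neg_distrib]
      congr 1; ext j; ring
    rw [e4]
    ring
  -- 1 - exp(-θ) ≥ θ(1-θ)
  have hexp : θ * (1 - θ) ≤ 1 - Real.exp (-θ) := by
    have h1 : θ + 1 ≤ Real.exp θ := Real.add_one_le_exp θ
    have hid : Real.exp (-θ) * Real.exp θ = 1 := by rw [← Real.exp_add]; simp
    have hp := Real.exp_pos (-θ)
    have hmul : Real.exp (-θ) * (θ + 1) ≤ 1 := by
      calc Real.exp (-θ) * (θ + 1) ≤ Real.exp (-θ) * Real.exp θ :=
            mul_le_mul_of_nonneg_left h1 hp.le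
        _ = 1 := hid
    nlinarith [sq_nonneg θ, hθ0.le, hmul]
  -- final numeric assembly
  have hkey : θ*(1-θ) - θ*(1-2*ε) = 7*ε^2/16 := by rw [hθ]; ring
  have hfinal : (ε^2/16) * G ≤ θ * (1-θ) - θ * (s^2/(1-s)^2) := by
    have h1 : θ * (s^2/(1-s)^2) ≤ θ * (1 - 2*ε) := mul_le_mul_of_nonneg_left hfrac hθ0.le
    have h2 : (ε^2/16) * G ≤ (ε^2/16) * 2 := mul_le_mul_of_nonneg_left hG2 (by positivity)
    have h3 : (ε^2/16) * (2:ℝ) ≤ 7*ε^2/16 := by nlinarith [sq_nonneg ε]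
    linarith [h1, h2, h3, hkey]
  have goal2 : (ε^2/16) * G ≤ G - ∑ j ∈ Finset.range (R+1), Real.exp (θ * ((j:ℝ)-1)) * w j := by
    rw [hsplit]
    linarith [htail, hexp, hfinal]
  linarith [goal2]

noncomputable section

def hgt (n d D k : ℕ) (j : Fin d) (u : Fin n → ℝ) : ℝ :=
  if h : (j:ℕ) < n*D ∧ (j:ℕ)/D < n then 1 - u ⟨(j:ℕ)/D, h.2⟩ / (2*k+1) else 1

def bodyC (n d D k : ℕ) : Set ((Fin n → ℝ) × (Fin d → ℝ)) :=
  {p | (∀ i, p.1 i ∈ Icc (0:ℝ) (2*k)) ∧ ∀ j, p.2 j ∈ Icc 0 (hgt n d D k j p.1)}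

variable {n d D k : ℕ}

lemma hgt_le_one {j : Fin d} {u : Fin n → ℝ} (hu : ∀ i, 0 ≤ u i) :
    hgt n d D k j u ≤ 1 := by
  unfold hgt
  split_ifs with h
  · have h1 : (0:ℝ) ≤ u ⟨(j:ℕ)/D, h.2⟩ := hu _
    have h2 : (0:ℝ) < 2*k+1 := by positivity
    have := div_nonneg h1 h2.le
    linarith
  · exact le_refl 1

lemma hgt_ge {j : Fin d} {u : Fin n → ℝ} (hu : ∀ i, u i ≤ 2*k) :
    1/(2*(k:ℝ)+1) ≤ hgt n d D k j u := by
  unfold hgt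
  split_ifs with h
  · have h1 : u ⟨(j:ℕ)/D, h.2⟩ ≤ 2*k := hu _
    have h2 : (0:ℝ) < 2*k+1 := by positivity
    have h3 : u ⟨(j:ℕ)/D, h.2⟩ / (2*(k:ℝ)+1) ≤ (2*(k:ℝ))/(2*k+1) := by gcongr
    have e : (1:ℝ) - (2*(k:ℝ))/(2*k+1) = 1/(2*k+1) := by field_simp; ring
    linarith
  · have h2 : (0:ℝ) < 2*k+1 := by positivity
    have : 1/(2*(k:ℝ)+1) ≤ 1 := by
      rw [div_le_one h2]; linarith
    linarith

lemma bodyC_convex : Convex ℝ (bodyC n d D k) := by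
  intro p hp q hq a b ha hb hab
  have hp1 := hp.1; have hp2 := hp.2; have hq1 := hq.1; have hq2 := hq.2
  constructor
  · intro i
    have h1 := hp1 i; have h2 := hq1 i
    simp only [mem_Icc] at h1 h2 ⊢
    have e : (a • p + b • q).1 i = a * p.1 i + b * q.1 i := rfl
    rw [e]
    constructor
    · nlinarith [mul_le_mul_of_nonneg_left h1.1 ha, mul_le_mul_of_nonneg_left h2.1 hb]
    · nlinarith [mul_le_mul_of_nonneg_left h1.2 ha, mul_le_mul_of_nonneg_left h2.2 hb]
  · intro j
    have h1 := hp2 j; have h2 := hq2 j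
    simp only [mem_Icc] at h1 h2 ⊢
    have e : (a • p + b • q).2 j = a * p.2 j + b * q.2 j := rfl
    rw [e]
    constructor
    · nlinarith [mul_le_mul_of_nonneg_left h1.1 ha, mul_le_mul_of_nonneg_left h2.1 hb]
    · have e2 : (a • p + b • q).1 = fun i => a * p.1 i + b * q.1 i := rfl
      rw [e2]
      unfold hgt at h1 h2 ⊢
      split_ifs with h
      · set c := (⟨(j:ℕ)/D, h.2⟩ : Fin n)
        simp only [dif_pos h] at h1 h2
        have c1 := mul_le_mul_of_nonneg_left h1.2 ha
        have c2 := mul_le_mul_of_nonneg_left h2.2 hb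
        have hL : (0:ℝ) < 2*(k:ℝ)+1 := by positivity
        have e3 : a * (1 - p.1 c / (2*(k:ℝ)+1)) + b * (1 - q.1 c / (2*(k:ℝ)+1))
            = 1 - (a * p.1 c + b * q.1 c) / (2*(k:ℝ)+1) := by
          field_simp
          linear_combination (2*(k:ℝ)+1) * hab
        linarith [c1, c2, e3.le, e3.ge]
      · simp only [dif_neg h] at h1 h2
        nlinarith [mul_le_mul_of_nonneg_left h1.2 ha, mul_le_mul_of_nonneg_left h2.2 hb]

lemma bodyC_isClosed : IsClosed (bodyC n d D k) := by
  have e : bodyC n d D k =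
      (⋂ i : Fin n, {p : (Fin n → ℝ) × (Fin d → ℝ) | p.1 i ∈ Icc (0:ℝ) (2*k)}) ∩
      (⋂ j : Fin d, {p : (Fin n → ℝ) × (Fin d → ℝ) | p.2 j ∈ Icc 0 (hgt n d D k j p.1)}) := by
    ext p; simp [bodyC, Set.mem_iInter]
  rw [e]
  apply IsClosed.inter
  · apply isClosed_iInter
    intro i
    exact IsClosed.preimage ((continuous_apply i).comp continuous_fst) isClosed_Icc
  · apply isClosed_iInter
    intro j
    have hc : Continuous (fun p : (Fin n → ℝ) × (Fin d → ℝ) => hgt n d D k j p.1) := by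
      unfold hgt
      split_ifs with h
      · exact continuous_const.sub (((continuous_apply _).comp continuous_fst).div_const _)
      · exact continuous_const
    have e2 : {p : (Fin n → ℝ) × (Fin d → ℝ) | p.2 j ∈ Icc 0 (hgt n d D k j p.1)}
        = {p : (Fin n → ℝ) × (Fin d → ℝ) | (0:ℝ) ≤ p.2 j}
          ∩ {p : (Fin n → ℝ) × (Fin d → ℝ) | p.2 j ≤ hgt n d D k j p.1} := by
      ext p; simp [mem_Icc]
    rw [e2]
    exact IsClosed.inter (isClosed_le continuous_const ((continuous_apply j).comp continuous_snd))
      (isClosed_le ((continuous_apply j).comp continuous_snd) hc)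

lemma bodyC_isCompact : IsCompact (bodyC n d D k) := by
  apply IsCompact.of_isClosed_subset
    ((isCompact_Icc (a := (fun _ => 0 : Fin n → ℝ)) (b := fun _ => 2*k)).prod
      (isCompact_Icc (a := (fun _ => 0 : Fin d → ℝ)) (b := fun _ => 1)))
    bodyC_isClosed
  rintro ⟨u, x⟩ ⟨h1, h2⟩
  constructor
  · rw [Set.mem_Icc]
    constructor <;> (intro i; have := h1 i; simp only [mem_Icc] at this)
    · exact this.1
    · exact this.2
  · rw [Set.mem_Icc]
    constructor <;> (intro j; have := h2 j; simp only [mem_Icc] at this)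
    · exact this.1
    · exact this.2.trans (hgt_le_one (fun i => (h1 i).1))

lemma bodyC_interior_nonempty (hk : 2 ≤ k) : (interior (bodyC n d D k)).Nonempty := by
  have hL : (0:ℝ) < 2*(k:ℝ)+1 := by positivity
  set U : Set ((Fin n → ℝ) × (Fin d → ℝ)) :=
    {p | (∀ i, p.1 i ∈ Ioo (0:ℝ) (2*k)) ∧ ∀ j, p.2 j ∈ Ioo (0:ℝ) (1/(2*k+1))} with hU
  have hUopen : IsOpen U := by
    have e : U = (⋂ i : Fin n, {p : (Fin n → ℝ) × (Fin d → ℝ) | p.1 i ∈ Ioo (0:ℝ) (2*k)}) ∩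
        (⋂ j : Fin d, {p : (Fin n → ℝ) × (Fin d → ℝ) | p.2 j ∈ Ioo (0:ℝ) (1/(2*k+1))}) := by
      ext p; simp [hU, Set.mem_iInter]
    rw [e]
    apply IsOpen.inter
    · apply isOpen_iInter_of_finite
      intro i
      exact IsOpen.preimage ((continuous_apply i).comp continuous_fst) isOpen_Ioo
    · apply isOpen_iInter_of_finite
      intro j
      exact IsOpen.preimage ((continuous_apply j).comp continuous_snd) isOpen_Ioo
  have hUsub : U ⊆ bodyC n d D k := by
    rintro ⟨u, x⟩ ⟨h1, h2⟩
    constructor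
    · intro i
      have := h1 i
      simp only [mem_Ioo] at this
      exact ⟨this.1.le, this.2.le⟩
    · intro j
      have hx := h2 j
      simp only [mem_Ioo] at hx
      refine ⟨hx.1.le, hx.2.le.trans ?_⟩
      exact hgt_ge (fun i => (h1 i).2.le)
  have hptU : ((fun _ => (k:ℝ)), (fun _ => 1/(2*(2*(k:ℝ)+1)))) ∈ U := by
    constructor
    · intro i
      simp only [mem_Ioo]
      constructor
      · have : (2:ℝ) ≤ (k:ℝ) := by exact_mod_cast hk
        linarith
      · have : (2:ℝ) ≤ (k:ℝ) := by exact_mod_cast hk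
        nlinarith
    · intro j
      simp only [mem_Ioo]
      constructor
      · positivity
      · rw [div_lt_div_iff₀ (by positivity) hL]
        nlinarith
  exact ⟨_, interior_mono hUsub (hUopen.interior_eq ▸ hptU)⟩

lemma bodyC_proj (hk : 2 ≤ k) :
    Metric.closedBall (fun _ => (k:ℝ) : Fin n → ℝ) (k:ℝ) ⊆ Prod.fst '' (bodyC n d D k) := by
  intro u hu
  have hk0 : (0:ℝ) ≤ (k:ℝ) := by positivity
  rw [Metric.mem_closedBall, dist_pi_le_iff hk0] at hu
  have hcoord : ∀ i, 0 ≤ u i ∧ u i ≤ 2*k := by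
    intro i
    have := hu i
    rw [Real.dist_eq, abs_le] at this
    constructor <;> linarith [this.1, this.2]
  refine ⟨(u, fun _ => 0), ⟨fun i => ⟨(hcoord i).1, (hcoord i).2⟩, fun j => ?_⟩, rfl⟩
  refine ⟨le_refl 0, ?_⟩
  show (0:ℝ) ≤ hgt n d D k j u
  have h1 : 1/(2*(k:ℝ)+1) ≤ hgt n d D k j u := hgt_ge (fun i => (hcoord i).2)
  have : (0:ℝ) < 1/(2*(k:ℝ)+1) := by positivity
  linarith

/-- the weight of one lattice column -/
def Wt (D k : ℕ) (a : ℤ) : ℝ≥0∞ :=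
  if 0 ≤ a ∧ a ≤ 2*k then ENNReal.ofReal ((1 - (a:ℝ)/(2*(k:ℝ)+1))^D) else 0

lemma vol_slice (hD : 0 < D) (hnD : n*D ≤ d) (z : Fin n → ℤ) :
    volume {x : Fin d → ℝ | ((fun i => ((z i : ℤ) : ℝ)), x) ∈ bodyC n d D k}
      = ∏ i, Wt D k (z i) := by
  set zR : Fin n → ℝ := fun i => ((z i : ℤ) : ℝ) with hzR
  by_cases hg : ∀ i, 0 ≤ z i ∧ z i ≤ 2*k
  · -- grid case
    have hgR : ∀ i, zR i ∈ Icc (0:ℝ) (2*k) := by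
      intro i
      have := hg i
      simp only [hzR, mem_Icc]
      constructor
      · exact_mod_cast this.1
      · have : ((z i : ℤ):ℝ) ≤ ((2*k : ℤ):ℝ) := by exact_mod_cast this.2
        push_cast at this
        linarith
    have hset : {x : Fin d → ℝ | (zR, x) ∈ bodyC n d D k}
        = Set.pi univ (fun j => Icc 0 (hgt n d D k j zR)) := by
      ext x
      simp only [bodyC, mem_setOf_eq, Set.mem_pi, Set.mem_univ, forall_true_left]
      constructor
      · rintro ⟨_, h2⟩ j; exact h2 j
      · intro h; exact ⟨hgR, fun j => h j⟩
    rw [hset, volume_pi_pi]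
    have hvol : ∀ j : Fin d, volume (Icc (0:ℝ) (hgt n d D k j zR))
        = ENNReal.ofReal (hgt n d D k j zR) := by
      intro j; rw [Real.volume_Icc, sub_zero]
    rw [Finset.prod_congr rfl (fun j _ => hvol j)]
    -- convert product over Fin d to product over range, then group
    set g : ℕ → ℝ := fun i' => if h : i' < n then 1 - (zR ⟨i', h⟩) / (2*(k:ℝ)+1) else 1 with hgdef
    set Fnn : ℕ → ℝ≥0∞ := fun m => if m < n * D then ENNReal.ofReal (g (m / D)) else 1 with hF
    have e1 : ∀ j : Fin d, ENNReal.ofReal (hgt n d D k j zR) = Fnn (j:ℕ) := by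
      intro j
      simp only [hF, hgdef, hgt]
      by_cases hj : (j:ℕ) < n*D
      · have hdiv : (j:ℕ)/D < n := by
          rw [Nat.div_lt_iff_lt_mul hD]; omega
        rw [dif_pos ⟨hj, hdiv⟩, if_pos hj, dif_pos hdiv]
      · rw [if_neg hj]
        have : ¬((j:ℕ) < n*D ∧ (j:ℕ)/D < n) := fun hc => hj hc.1
        rw [dif_neg this]
        exact ENNReal.ofReal_one
    rw [Finset.prod_congr rfl (fun j _ => e1 j), Fin.prod_univ_eq_prod_range Fnn d]
    have e2 : ∏ m ∈ Finset.range d, Fnn m = ∏ m ∈ Finset.range (n*D), Fnn m := by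
      rw [← Finset.prod_subset (Finset.range_subset_range.2 hnD)]
      intro m _ hm
      simp only [Finset.mem_range, not_lt] at hm
      simp only [hF, if_neg (by omega : ¬ m < n*D)]
    have e3 : ∏ m ∈ Finset.range (n*D), Fnn m
        = ∏ m ∈ Finset.range (n*D), (fun m' => ENNReal.ofReal (g m')) (m / D) := by
      apply Finset.prod_congr rfl
      intro m hm
      simp only [Finset.mem_range] at hm
      simp only [hF, if_pos hm]
    rw [e2, e3, prod_range_mul_div (fun m' => ENNReal.ofReal (g m')) D hD n]
    rw [← Fin.prod_univ_eq_prod_range (fun i' => (ENNReal.ofReal (g i'))^D) n]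
    apply Finset.prod_congr rfl
    intro i _
    have hi : (i:ℕ) < n := i.isLt
    have hz1 : (0:ℝ) ≤ 1 - (zR i) / (2*(k:ℝ)+1) := by
      have h2 := (hgR i).2
      have hL : (0:ℝ) < 2*(k:ℝ)+1 := by positivity
      have h3 : zR i / (2*(k:ℝ)+1) ≤ (2*(k:ℝ))/(2*(k:ℝ)+1) := by gcongr
      have e : (1:ℝ) - (2*(k:ℝ))/(2*k+1) = 1/(2*k+1) := by field_simp; ring
      have h4 : (0:ℝ) < 1/(2*(k:ℝ)+1) := by positivity
      linarith
    have heta : (⟨(i:ℕ), hi⟩ : Fin n) = i := Fin.eta i hi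
    simp only [hgdef, dif_pos hi, heta]
    simp only [Wt, if_pos (hg i)]
    rw [ENNReal.ofReal_pow hz1]
  · -- non-grid case : slice is empty
    push_neg at hg
    obtain ⟨i0, hi0⟩ := hg
    have hset : {x : Fin d → ℝ | (zR, x) ∈ bodyC n d D k} = (∅ : Set (Fin d → ℝ)) := by
      ext x
      simp only [bodyC, mem_setOf_eq, Set.mem_empty_iff_false, iff_false]
      rintro ⟨h1, _⟩
      have := h1 i0
      simp only [mem_Icc, hzR] at this
      have c1 : (0:ℤ) ≤ z i0 := by exact_mod_cast this.1
      have c2 : (z i0 : ℝ) ≤ 2*(k:ℝ) := this.2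
      have c2' : z i0 ≤ 2*(k:ℤ) := by exact_mod_cast c2
      exact absurd (hi0 c1) (by omega)
    rw [hset]
    simp only [measure_empty]
    symm
    apply Finset.prod_eq_zero (Finset.mem_univ i0)
    simp only [Wt]
    rw [if_neg (fun hc => absurd (hi0 hc.1) (not_lt.2 hc.2))]

lemma vol_slice_S (hD : 0 < D) (hnD : n*D ≤ d) (z : Fin n → ℤ) :
    volume {x : Fin d → ℝ | ((fun i => ((z i : ℤ) : ℝ)), x) ∈ bodyC n d D k ∩ mixLattice n d}
      = ∏ i, Wt D k (z i) := by
  have e : {x : Fin d → ℝ | ((fun i => ((z i : ℤ) : ℝ)), x) ∈ bodyC n d D k ∩ mixLattice n d}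
      = {x : Fin d → ℝ | ((fun i => ((z i : ℤ) : ℝ)), x) ∈ bodyC n d D k} := by
    ext x
    simp only [mem_setOf_eq, Set.mem_inter_iff, mixLattice]
    exact ⟨fun h => h.1, fun h => ⟨h, ⟨z, rfl⟩⟩⟩
  rw [e, vol_slice hD hnD z]

lemma vol_slice_half (hD : 0 < D) (hnD : n*D ≤ d) (εf : Fin n → ℝ) (c : ℝ) (z : Fin n → ℤ) :
    volume {x : Fin d → ℝ | ((fun i => ((z i : ℤ) : ℝ)), x) ∈
        (bodyC n d D k ∩ mixLattice n d) ∩ {u | c ≤ dotP n d (εf, (0 : Fin d → ℝ)) u}}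
      = if c ≤ ∑ i, εf i * ((z i : ℤ) : ℝ) then ∏ i, Wt D k (z i) else 0 := by
  have hdot : ∀ x : Fin d → ℝ,
      dotP n d (εf, (0 : Fin d → ℝ)) ((fun i => ((z i : ℤ) : ℝ)), x) = ∑ i, εf i * ((z i : ℤ) : ℝ) := by
    intro x
    simp [dotP]
  by_cases hc : c ≤ ∑ i, εf i * ((z i : ℤ) : ℝ)
  · rw [if_pos hc]
    have e : {x : Fin d → ℝ | ((fun i => ((z i : ℤ) : ℝ)), x) ∈
        (bodyC n d D k ∩ mixLattice n d) ∩ {u | c ≤ dotP n d (εf, (0 : Fin d → ℝ)) u}}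
        = {x : Fin d → ℝ | ((fun i => ((z i : ℤ) : ℝ)), x) ∈ bodyC n d D k} := by
      ext x
      simp only [mem_setOf_eq, Set.mem_inter_iff, mixLattice]
      constructor
      · rintro ⟨⟨h1, _⟩, _⟩; exact h1
      · intro h
        refine ⟨⟨h, ⟨z, rfl⟩⟩, ?_⟩
        show c ≤ dotP n d (εf, (0 : Fin d → ℝ)) _
        rw [hdot x]; exact hc
    rw [e, vol_slice hD hnD z]
  · rw [if_neg hc]
    have e : {x : Fin d → ℝ | ((fun i => ((z i : ℤ) : ℝ)), x) ∈
        (bodyC n d D k ∩ mixLattice n d) ∩ {u | c ≤ dotP n d (εf, (0 : Fin d → ℝ)) u}}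
        = (∅ : Set (Fin d → ℝ)) := by
      ext x
      simp only [mem_setOf_eq, Set.mem_inter_iff, Set.mem_empty_iff_false, iff_false]
      rintro ⟨_, h2⟩
      have h2' : c ≤ dotP n d (εf, (0 : Fin d → ℝ)) ((fun i => ((z i : ℤ) : ℝ)), x) := h2
      rw [hdot x] at h2'
      exact hc h2'
    rw [e, measure_empty]

lemma tsum_Wt_mul (D k : ℕ) (φ : ℤ → ℝ) (hφ : ∀ a, 0 ≤ φ a) :
    ∑' a : ℤ, ENNReal.ofReal (φ a) * Wt D k a
      = ENNReal.ofReal (∑ j ∈ Finset.range (2*k+1),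
          φ j * (1 - (j:ℝ)/(2*(k:ℝ)+1))^D) := by
  rw [tsum_int_of_support_range (fun a => ENNReal.ofReal (φ a) * Wt D k a) (2*k)
    (by
      intro a ha
      show ENNReal.ofReal (φ a) * Wt D k a = 0
      have hz : Wt D k a = 0 := by
        simp only [Wt]
        rw [if_neg]
        intro hc
        exact ha ⟨hc.1, by exact_mod_cast hc.2⟩
      rw [hz, mul_zero])]
  have hnn : ∀ j ∈ Finset.range (2*k+1), 0 ≤ φ j * (1 - (j:ℝ)/(2*(k:ℝ)+1))^D := by
    intro j hj
    simp only [Finset.mem_range] at hj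
    apply mul_nonneg (hφ _)
    apply pow_nonneg
    have hL : (0:ℝ) < 2*(k:ℝ)+1 := by positivity
    rw [sub_nonneg, div_le_one hL]
    have h1 : (j:ℕ) ≤ 2*k := by omega
    have h2 : (j:ℝ) ≤ 2*(k:ℝ) := by exact_mod_cast h1
    linarith
  calc ∑ j ∈ Finset.range (2*k+1), (fun a => ENNReal.ofReal (φ a) * Wt D k a) ((j:ℕ):ℤ)
      = ∑ j ∈ Finset.range (2*k+1), ENNReal.ofReal (φ j * (1 - (j:ℝ)/(2*(k:ℝ)+1))^D) := by
        apply Finset.sum_congr rfl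
        intro j hj
        simp only [Finset.mem_range] at hj
        have hcond : (0:ℤ) ≤ ((j:ℕ):ℤ) ∧ ((j:ℕ):ℤ) ≤ 2*k := ⟨by positivity, by exact_mod_cast by omega⟩
        show ENNReal.ofReal (φ j) * Wt D k j = _
        simp only [Wt, if_pos hcond]
        rw [← ENNReal.ofReal_mul (hφ _)]
        rw [show ((((j:ℕ):ℤ)):ℝ) = (j:ℝ) from by push_cast; ring]
    _ = ENNReal.ofReal (∑ j ∈ Finset.range (2*k+1),
          φ j * (1 - (j:ℝ)/(2*(k:ℝ)+1))^D) := (ENNReal.ofReal_sum_of_nonneg hnn).symm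

lemma master (n d D k : ℕ) (hk : 2 ≤ k) (hn : 0 < n) (hD : 0 < D) (hnD : n*D ≤ d)
    (ε : ℝ) (hε0 : 0 < ε) (hε16 : ε ≤ 0.16)
    (hrate : (Real.log 2 + ε) * (2*(k:ℝ)+1) ≤ (D:ℝ)) (hD3k : (D:ℝ) ≤ 3*(k:ℝ)) :
    ∀ y ∈ bodyC n d D k ∩ mixLattice n d,
      depth n d (bodyC n d D k ∩ mixLattice n d) y ≤
        ENNReal.ofReal ((1 - ε^2/16)^n) * mixVol n d (bodyC n d D k ∩ mixLattice n d) := by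
  have hL : (0:ℝ) < 2*(k:ℝ)+1 := by positivity
  have hk2 : (2:ℝ) ≤ (k:ℝ) := by exact_mod_cast hk
  set w : ℕ → ℝ := fun j => (1 - (j:ℝ)/(2*(k:ℝ)+1))^D with hwdef
  -- basic weight facts
  have hbase_nn : ∀ j : ℕ, j ≤ 2*k → (0:ℝ) ≤ 1 - (j:ℝ)/(2*(k:ℝ)+1) := by
    intro j hj
    have h2 : (j:ℝ) ≤ 2*(k:ℝ) := by exact_mod_cast hj
    rw [sub_nonneg, div_le_one hL]
    linarith
  have hwnn : ∀ j, j ≤ 2*k → 0 ≤ w j := fun j hj => pow_nonneg (hbase_nn j hj) D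
  have hwle : ∀ j, j ≤ 2*k → w j ≤ Real.exp (-(Real.log 2 + ε) * j) := by
    intro j hj
    have h1 : 1 - (j:ℝ)/(2*(k:ℝ)+1) ≤ Real.exp (-((j:ℝ)/(2*(k:ℝ)+1))) := by
      have := Real.add_one_le_exp (-((j:ℝ)/(2*(k:ℝ)+1)))
      linarith
    have h2 : w j ≤ Real.exp (-((j:ℝ)/(2*(k:ℝ)+1))) ^ D :=
      pow_le_pow_left₀ (hbase_nn j hj) h1 D
    have h3 : Real.exp (-((j:ℝ)/(2*(k:ℝ)+1))) ^ D
        = Real.exp (-((j:ℝ)/(2*(k:ℝ)+1)) * D) := by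
      rw [← Real.exp_nat_mul]; ring_nf
    have h4 : -((j:ℝ)/(2*(k:ℝ)+1)) * D ≤ -(Real.log 2 + ε) * j := by
      have hj0 : (0:ℝ) ≤ (j:ℝ) := Nat.cast_nonneg j
      have hlog : (0:ℝ) < Real.log 2 + ε := by
        have := Real.log_nonneg (by norm_num : (1:ℝ) ≤ 2)
        linarith
      rw [neg_mul, neg_mul, neg_le_neg_iff]
      rw [div_mul_eq_mul_div, le_div_iff₀ hL]
      calc (Real.log 2 + ε) * (j:ℝ) * (2*(k:ℝ)+1)
          = (j:ℝ) * ((Real.log 2 + ε) * (2*(k:ℝ)+1)) := by ring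
        _ ≤ (j:ℝ) * (D:ℝ) := mul_le_mul_of_nonneg_left hrate hj0
    calc w j ≤ Real.exp (-((j:ℝ)/(2*(k:ℝ)+1))) ^ D := h2
      _ = Real.exp (-((j:ℝ)/(2*(k:ℝ)+1)) * D) := h3
      _ ≤ Real.exp (-(Real.log 2 + ε) * j) := Real.exp_le_exp.2 h4
  have hw0 : w 0 = 1 := by simp [hwdef]
  have hw1 : 0.135 ≤ w 1 := by
    have hk0 : (0:ℝ) < 2*(k:ℝ) := by linarith
    have hbase : Real.exp (-(1/(2*(k:ℝ)))) ≤ 1 - 1/(2*(k:ℝ)+1) := by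
      have h1 : 1/(2*(k:ℝ)) + 1 ≤ Real.exp (1/(2*(k:ℝ))) := Real.add_one_le_exp _
      have hid : Real.exp (-(1/(2*(k:ℝ)))) * Real.exp (1/(2*(k:ℝ))) = 1 := by
        rw [← Real.exp_add]; simp
      have hp := Real.exp_pos (-(1/(2*(k:ℝ))))
      have e1 : (1:ℝ) - 1/(2*(k:ℝ)+1) = (2*(k:ℝ))/(2*(k:ℝ)+1) := by field_simp; ring
      rw [e1, le_div_iff₀ hL]
      have step : Real.exp (-(1/(2*(k:ℝ)))) * (1/(2*(k:ℝ)) + 1) ≤ 1 := by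
        calc Real.exp (-(1/(2*(k:ℝ)))) * (1/(2*(k:ℝ)) + 1)
            ≤ Real.exp (-(1/(2*(k:ℝ)))) * Real.exp (1/(2*(k:ℝ))) :=
              mul_le_mul_of_nonneg_left h1 hp.le
          _ = 1 := hid
      have hinv : (1/(2*(k:ℝ))) * (2*(k:ℝ)) = 1 := by field_simp
      nlinarith [mul_le_mul_of_nonneg_right step hk0.le, hinv, hp.le]
    have hstep1 : Real.exp (-(1/(2*(k:ℝ)))) ^ D ≤ w 1 := by
      have := pow_le_pow_left₀ (Real.exp_nonneg _) hbase D
      simpa [hwdef] using this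
    have hstep2 : Real.exp (-(1/(2*(k:ℝ)))) ^ D = Real.exp (-((D:ℝ)/(2*(k:ℝ)))) := by
      rw [← Real.exp_nat_mul]; congr 1; field_simp
    have hstep3 : Real.exp (-(3/2 : ℝ)) ≤ Real.exp (-((D:ℝ)/(2*(k:ℝ)))) := by
      apply Real.exp_le_exp.2
      rw [neg_le_neg_iff, div_le_iff₀ hk0]
      linarith
    have hnum : (0.135 : ℝ) ≤ Real.exp (-(3/2 : ℝ)) := by
      have h1 : Real.exp (3/2 : ℝ) ≤ Real.exp 1 ^ 2 := by
        rw [← Real.exp_nat_mul]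
        apply Real.exp_le_exp.2
        norm_num
      have h2 : Real.exp 1 ^ 2 ≤ 7.4 := by
        have := Real.exp_one_lt_d9
        nlinarith [Real.exp_pos 1]
      have h3 : Real.exp (-(3/2:ℝ)) * Real.exp (3/2:ℝ) = 1 := by
        rw [← Real.exp_add]; simp
      have hp := Real.exp_pos (-(3/2:ℝ))
      nlinarith [Real.exp_pos (3/2:ℝ)]
    linarith
  -- the total mixed volume
  set G : ℝ := ∑ j ∈ Finset.range (2*k+1), w j with hGdef
  have hGnn : 0 ≤ G := Finset.sum_nonneg fun j hj => hwnn j (by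
    simp only [Finset.mem_range] at hj; omega)
  have htsumWt : ∑' a : ℤ, Wt D k a = ENNReal.ofReal G := by
    have := tsum_Wt_mul D k (fun _ => 1) (fun _ => by norm_num)
    simpa using this
  have htotal : mixVol n d (bodyC n d D k ∩ mixLattice n d) = (ENNReal.ofReal G)^n := by
    unfold mixVol
    rw [tsum_congr (fun z => vol_slice_S hD hnD z)]
    rw [tsum_pi_prod n (fun _ a => Wt D k a)]
    rw [Finset.prod_congr rfl (fun (i : Fin n) _ => htsumWt)]
    rw [Finset.prod_const, Finset.card_univ, Fintype.card_fin]
  -- the per-point bound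
  intro y hy
  obtain ⟨hyC, hyL⟩ := hy
  obtain ⟨z0, hz0⟩ := hyL
  have hz0nn : ∀ i, 0 ≤ z0 i := by
    intro i
    have h1 := (hyC.1 i).1
    rw [hz0] at h1
    have h2 : (0:ℝ) ≤ ((z0 i : ℤ):ℝ) := h1
    exact_mod_cast h2
  set εf : Fin n → ℝ := fun i => if z0 i = 0 then (-1:ℝ) else 1 with hεf
  set c0 : ℝ := ∑ i, εf i * ((z0 i : ℤ) : ℝ) with hc0
  have ha : ((εf, (0 : Fin d → ℝ)) : (Fin n → ℝ) × (Fin d → ℝ)) ≠ 0 := by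
    intro h0
    have h1 := congrFun (congrArg Prod.fst h0) ⟨0, hn⟩
    simp only [hεf] at h1
    split_ifs at h1 <;> norm_num at h1
  have hcle : c0 ≤ dotP n d (εf, (0 : Fin d → ℝ)) y := by
    unfold dotP
    rw [hz0]
    simp only [hc0]
    simp
  have hdepth : depth n d (bodyC n d D k ∩ mixLattice n d) y ≤
      mixVol n d ((bodyC n d D k ∩ mixLattice n d) ∩
        {u | c0 ≤ dotP n d (εf, (0 : Fin d → ℝ)) u}) := by
    unfold depth
    refine iInf_le_of_le (εf, (0 : Fin d → ℝ)) ?_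
    refine iInf_le_of_le c0 ?_
    refine iInf_le_of_le ha ?_
    exact iInf_le _ hcle
  -- bound the captured mass
  have hcap : mixVol n d ((bodyC n d D k ∩ mixLattice n d) ∩
      {u | c0 ≤ dotP n d (εf, (0 : Fin d → ℝ)) u})
      ≤ (ENNReal.ofReal ((1 - ε^2/16) * G))^n := by
    unfold mixVol
    rw [tsum_congr (fun z => vol_slice_half hD hnD εf c0 z)]
    have hpoint : ∀ z : Fin n → ℤ,
        (if c0 ≤ ∑ i, εf i * ((z i : ℤ) : ℝ) then ∏ i, Wt D k (z i) else 0)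
        ≤ ∏ i, (ENNReal.ofReal (Real.exp ((ε/4) * (εf i * (((z i : ℤ):ℝ) - ((z0 i : ℤ):ℝ)))))
            * Wt D k (z i)) := by
      intro z
      by_cases hcz : c0 ≤ ∑ i, εf i * ((z i : ℤ) : ℝ)
      · rw [if_pos hcz, Finset.prod_mul_distrib]
        have hprodE : ∏ i, ENNReal.ofReal
            (Real.exp ((ε/4) * (εf i * (((z i : ℤ):ℝ) - ((z0 i : ℤ):ℝ)))))
            = ENNReal.ofReal (Real.exp ((ε/4) * ((∑ i, εf i * ((z i : ℤ):ℝ)) - c0))) := by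
          rw [← ENNReal.ofReal_prod_of_nonneg (fun i _ => Real.exp_nonneg _)]
          congr 1
          rw [← Real.exp_sum]
          congr 1
          rw [hc0, ← Finset.sum_sub_distrib, Finset.mul_sum]
          congr 1
          ext i
          ring
        have h1le : (1 : ℝ≥0∞) ≤ ∏ i, ENNReal.ofReal
            (Real.exp ((ε/4) * (εf i * (((z i : ℤ):ℝ) - ((z0 i : ℤ):ℝ))))) := by
          rw [hprodE]
          have hS : 0 ≤ (ε/4) * ((∑ i, εf i * ((z i : ℤ):ℝ)) - c0) := by
            apply mul_nonneg (by positivity)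
            linarith
          have : (1:ℝ) ≤ Real.exp ((ε/4) * ((∑ i, εf i * ((z i : ℤ):ℝ)) - c0)) := by
            have := Real.add_one_le_exp ((ε/4) * ((∑ i, εf i * ((z i : ℤ):ℝ)) - c0))
            linarith
          rw [← ENNReal.ofReal_one]
          exact ENNReal.ofReal_le_ofReal this
        exact le_mul_of_one_le_left zero_le h1le
      · rw [if_neg hcz]
        exact zero_le
    calc ∑' z : Fin n → ℤ, (if c0 ≤ ∑ i, εf i * ((z i : ℤ) : ℝ) then ∏ i, Wt D k (z i) else 0)
        ≤ ∑' z : Fin n → ℤ, ∏ i,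
            (ENNReal.ofReal (Real.exp ((ε/4) * (εf i * (((z i : ℤ):ℝ) - ((z0 i : ℤ):ℝ)))))
              * Wt D k (z i)) := ENNReal.tsum_le_tsum hpoint
      _ = ∏ i, ∑' a : ℤ,
            (ENNReal.ofReal (Real.exp ((ε/4) * (εf i * (((a : ℤ):ℝ) - ((z0 i : ℤ):ℝ)))))
              * Wt D k a) :=
          tsum_pi_prod n (fun i a =>
            ENNReal.ofReal (Real.exp ((ε/4) * (εf i * (((a : ℤ):ℝ) - ((z0 i : ℤ):ℝ)))))
              * Wt D k a)
      _ ≤ ∏ (_i : Fin n), ENNReal.ofReal ((1 - ε^2/16) * G) := ?_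
      _ = (ENNReal.ofReal ((1 - ε^2/16) * G))^n := by
          rw [Finset.prod_const, Finset.card_univ, Fintype.card_fin]
    apply Finset.prod_le_prod'
    intro i _
    rw [tsum_Wt_mul D k (fun a => Real.exp ((ε/4) * (εf i * (((a : ℤ):ℝ) - ((z0 i : ℤ):ℝ)))))
      (fun a => Real.exp_nonneg _)]
    apply ENNReal.ofReal_le_ofReal
    by_cases hz0i : z0 i = 0
    · have hcongr : ∀ j ∈ Finset.range (2*k+1),
          Real.exp ((ε/4) * (εf i * (((j:ℤ):ℝ) - ((z0 i : ℤ):ℝ)))) * w j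
          = Real.exp (-(ε/4) * j) * w j := by
        intro j hj
        congr 2
        simp only [hεf, if_pos hz0i, hz0i]
        push_cast
        ring
      rw [Finset.sum_congr rfl hcongr]
      exact coordA ε (2*k) w hε0 hε16 (by omega) hw0 hw1 hwnn hwle
    · have hz1 : (1:ℤ) ≤ z0 i := by
        have := hz0nn i
        omega
      have hterm : ∀ j ∈ Finset.range (2*k+1),
          Real.exp ((ε/4) * (εf i * (((j:ℤ):ℝ) - ((z0 i : ℤ):ℝ)))) * w j
          ≤ Real.exp ((ε/4) * ((j:ℝ) - 1)) * w j := by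
        intro j hj
        simp only [Finset.mem_range] at hj
        apply mul_le_mul_of_nonneg_right _ (hwnn j (by omega))
        apply Real.exp_le_exp.2
        simp only [hεf, if_neg hz0i]
        have : (1:ℝ) ≤ ((z0 i : ℤ):ℝ) := by exact_mod_cast hz1
        have hε4 : (0:ℝ) ≤ ε/4 := by positivity
        push_cast
        nlinarith
      calc ∑ j ∈ Finset.range (2*k+1),
            Real.exp ((ε/4) * (εf i * (((j:ℤ):ℝ) - ((z0 i : ℤ):ℝ)))) * w j
          ≤ ∑ j ∈ Finset.range (2*k+1), Real.exp ((ε/4) * ((j:ℝ) - 1)) * w j :=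
            Finset.sum_le_sum hterm
        _ ≤ (1 - ε^2/16) * ∑ j ∈ Finset.range (2*k+1), w j :=
            coordB ε (2*k) w hε0 hε16 (by omega) hw0 hwnn hwle
  -- assemble
  have hc5 : (0:ℝ) ≤ 1 - ε^2/16 := by nlinarith
  calc depth n d (bodyC n d D k ∩ mixLattice n d) y
      ≤ mixVol n d ((bodyC n d D k ∩ mixLattice n d) ∩
          {u | c0 ≤ dotP n d (εf, (0 : Fin d → ℝ)) u}) := hdepth
    _ ≤ (ENNReal.ofReal ((1 - ε^2/16) * G))^n := hcap
    _ = ENNReal.ofReal ((1 - ε^2/16)^n) * (ENNReal.ofReal G)^n := by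
        rw [ENNReal.ofReal_mul hc5, mul_pow, ← ENNReal.ofReal_pow hc5]
    _ = ENNReal.ofReal ((1 - ε^2/16)^n) * mixVol n d (bodyC n d D k ∩ mixLattice n d) := by
        rw [htotal]


/-- Necessity of a linear ℓ∞ radius: for any `α > log 2` there are `γ, M > 0` such that for all
`k ≥ 2` and `m ≥ 2(1 + αk)` one can split `m = n + d` and find a convex body whose projection
contains a translate of `k·B∞ⁿ` yet every point of `S` has depth at most
`M·exp(−γ·m/k)·H_d(S)`.  (`Fin n → ℝ` carries the sup norm, so `Metric.closedBall z₀ k` is the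
translate `z₀ + k·B∞ⁿ`.) -/
theorem linear_threshold_necessity (α : ℝ) (hα : Real.log 2 < α) :
    ∃ γ M : ℝ, 0 < γ ∧ 0 < M ∧
      ∀ k : ℕ, 2 ≤ k → ∀ m : ℕ, 2 * (1 + α * k) ≤ (m : ℝ) →
        ∃ n d : ℕ, 1 ≤ n ∧ 1 ≤ d ∧ n + d = m ∧
          ∃ C : Set ((Fin n → ℝ) × (Fin d → ℝ)),
            Convex ℝ C ∧ IsCompact C ∧ (interior C).Nonempty ∧
            (∃ z₀ : Fin n → ℝ, Metric.closedBall z₀ (k : ℝ) ⊆ Prod.fst '' C) ∧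
            ∀ y ∈ C ∩ mixLattice n d,
              depth n d (C ∩ mixLattice n d) y ≤
                ENNReal.ofReal (M * Real.exp (-γ * m / k)) *
                  mixVol n d (C ∩ mixLattice n d) := by
  have hl2 : (0:ℝ) < Real.log 2 := Real.log_pos (by norm_num)
  have hl2u : Real.log 2 < 0.6931471808 := Real.log_two_lt_d9
  have hl2l : 0.6931471803 < Real.log 2 := Real.log_two_gt_d9
  set ε : ℝ := min (1 - Real.log 2) (α - Real.log 2) / 2 with hεdef
  have hε0 : 0 < ε := by
    apply div_pos _ (by norm_num)
    apply lt_min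
    · linarith
    · linarith
  have hε16 : ε ≤ 0.16 := by
    have h1 : ε ≤ (1 - Real.log 2)/2 := by
      apply div_le_div_of_nonneg_right (min_le_left _ _) (by norm_num) |>.trans_eq rfl
    linarith
  have hεα : Real.log 2 + 2*ε ≤ α := by
    have h1 : ε ≤ (α - Real.log 2)/2 := by
      apply div_le_div_of_nonneg_right (min_le_right _ _) (by norm_num) |>.trans_eq rfl
    linarith
  have hεν : Real.log 2 + 2*ε ≤ 1 := by
    have h1 : ε ≤ (1 - Real.log 2)/2 := by
      apply div_le_div_of_nonneg_right (min_le_left _ _) (by norm_num) |>.trans_eq rfl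
    linarith
  refine ⟨ε^2/112, 1, by positivity, one_pos, ?_⟩
  intro k hk m hm
  have hk2 : (2:ℝ) ≤ (k:ℝ) := by exact_mod_cast hk
  have hk0 : (0:ℝ) < (k:ℝ) := by linarith
  have hm5 : 5 ≤ m := by
    have hα69 : (0.69:ℝ) ≤ α := by linarith
    have hαk : (1.38:ℝ) ≤ α*(k:ℝ) := by
      nlinarith [mul_le_mul hα69 hk2 (by norm_num : (0:ℝ) ≤ 2) (by linarith : (0:ℝ) ≤ α)]
    have h4 : (4:ℝ) < (m:ℝ) := by nlinarith
    have : 4 < m := by exact_mod_cast h4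
    omega
  set ν : ℝ := Real.log 2 + 2*ε with hνdef
  have hν0 : 0 < ν := by positivity
  have hν1 : ν ≤ 1 := hεν
  obtain ⟨D, hDdef⟩ : ∃ D : ℕ, D = min (Nat.ceil (ν * (2*(k:ℝ)+1))) (m-1) := ⟨_, rfl⟩
  obtain ⟨n, hndef⟩ : ∃ n : ℕ, n = m / (1+D) := ⟨_, rfl⟩
  obtain ⟨d, hddef⟩ : ∃ d : ℕ, d = m - n := ⟨_, rfl⟩
  have hD1 : 1 ≤ D := by
    rw [hDdef]
    apply le_min
    · rw [Nat.one_le_ceil_iff]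
      positivity
    · omega
  have hDle : D ≤ m - 1 := hDdef ▸ min_le_right _ _
  have hceil_le : Nat.ceil (ν * (2*(k:ℝ)+1)) ≤ 2*k+2 := by
    rw [Nat.ceil_le]
    push_cast
    nlinarith
  have hD2k2 : D ≤ 2*k+2 := hDdef ▸ (min_le_left _ _).trans hceil_le
  have hD3k : (D:ℝ) ≤ 3*(k:ℝ) := by
    have h1 : (D:ℝ) ≤ ((2*k+2:ℕ):ℝ) := by exact_mod_cast hD2k2
    push_cast at h1
    linarith
  have hn1 : 1 ≤ n := by
    rw [hndef, Nat.one_le_div_iff (by omega)]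
    omega
  have hnm : n*(1+D) ≤ m := hndef ▸ Nat.div_mul_le_self m (1+D)
  have hexpand : n*(1+D) = n + n*D := by ring
  have hnDd : n*D ≤ d := by omega
  have hd1 : 1 ≤ d := by
    have h2n : n + n ≤ m := by
      calc n + n = n*2 := by ring
        _ ≤ n*(1+D) := Nat.mul_le_mul_left n (by omega)
        _ ≤ m := hnm
    omega
  have hrate : (Real.log 2 + ε) * (2*(k:ℝ)+1) ≤ (D:ℝ) := by
    by_cases hcase : Nat.ceil (ν * (2*(k:ℝ)+1)) ≤ m-1
    · have hDeq : D = Nat.ceil (ν * (2*(k:ℝ)+1)) := hDdef.trans (min_eq_left hcase)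
      have h1 : ν * (2*(k:ℝ)+1) ≤ (D:ℝ) := by
        rw [hDeq]
        exact Nat.le_ceil _
      nlinarith
    · have hDeq : D = m - 1 := hDdef.trans (min_eq_right (by omega))
      have h1 : (D:ℝ) = (m:ℝ) - 1 := by
        rw [hDeq]
        have : (1:ℕ) ≤ m := by omega
        push_cast [Nat.cast_sub this]
        ring
      rw [h1]
      nlinarith
  have hmkn : (m:ℝ) ≤ 7*(k:ℝ)*(n:ℝ) := by
    have hmod := Nat.div_add_mod m (1+D)
    rw [← hndef] at hmod
    have hmodlt : m % (1+D) < 1+D := Nat.mod_lt _ (by omega)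
    have hcast : ((1+D:ℕ):ℝ) * (n:ℝ) + ((m % (1+D) : ℕ):ℝ) = (m:ℝ) := by
      exact_mod_cast hmod
    have hr : ((m % (1+D) : ℕ):ℝ) ≤ (D:ℝ) := by exact_mod_cast (by omega : m % (1+D) ≤ D)
    have hn1' : (1:ℝ) ≤ (n:ℝ) := by exact_mod_cast hn1
    have hnn0 : (0:ℝ) ≤ (n:ℝ) := by linarith
    push_cast at hcast
    have h5 : (D:ℝ)*(n:ℝ) ≤ 3*(k:ℝ)*(n:ℝ) := mul_le_mul_of_nonneg_right hD3k hnn0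
    have h6 : (0:ℝ) ≤ ((k:ℝ)-1)*(n:ℝ) := mul_nonneg (by linarith) hnn0
    have h7 : (0:ℝ) ≤ (3*(k:ℝ))*((n:ℝ)-1) := mul_nonneg (by linarith) (by linarith)
    have hr3 : ((m % (1+D) : ℕ):ℝ) ≤ 3*(k:ℝ) := hr.trans hD3k
    linarith [hcast, h5, h6, h7, hr3]
  refine ⟨n, d, hn1, hd1, (by omega : n + d = m), bodyC n d D k, bodyC_convex, bodyC_isCompact,
    bodyC_interior_nonempty hk, ⟨(fun _ => (k:ℝ)), bodyC_proj hk⟩, ?_⟩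
  intro y hy
  refine (master n d D k hk (by omega) (by omega) hnDd ε hε0 hε16 hrate hD3k y hy).trans ?_
  apply mul_le_mul_left
  apply ENNReal.ofReal_le_ofReal
  rw [one_mul]
  have hc5 : (0:ℝ) ≤ 1 - ε^2/16 := by nlinarith
  have h1 : (1 - ε^2/16) ≤ Real.exp (-(ε^2/16)) := by
    have := Real.add_one_le_exp (-(ε^2/16))
    linarith
  have h2 : (1 - ε^2/16)^n ≤ Real.exp (-(ε^2/16))^n := pow_le_pow_left₀ hc5 h1 n
  have h3 : Real.exp (-(ε^2/16))^n = Real.exp (-(ε^2/16) * n) := by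
    rw [← Real.exp_nat_mul]; ring_nf
  have h4 : -(ε^2/16) * (n:ℝ) ≤ -(ε^2/112) * (m:ℝ) / (k:ℝ) := by
    rw [le_div_iff₀ hk0]
    nlinarith [mul_nonneg (sq_nonneg ε) (by linarith : (0:ℝ) ≤ 7*(k:ℝ)*(n:ℝ) - (m:ℝ))]
  have h5 := Real.exp_le_exp.2 h4
  calc (1-ε^2/16)^n ≤ Real.exp (-(ε^2/16))^n := h2
    _ = Real.exp (-(ε^2/16)*(n:ℝ)) := h3
    _ ≤ Real.exp (-(ε^2/112) * (m:ℝ) / (k:ℝ)) := h5
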